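/- The WENO-6 perturbation is uniformly bounded: the nonlinear part F satisfies |F_n| ≤ (1/2)·max(sup_k |df_k|, sup_k |Df_k|) for every bounded sequence f, where F_n = (α₀/16)Df_{n+2} - ((3α₀+α₁)/16)Df_{n+1} - ((α₁+3α₂)/16)Df_n + (α₂/16)Df_{n-1}. -/
import Mathlib


/-- First difference operator. -/
def d (f : ℤ → ℝ) (n : ℤ) : ℝ := f (n + 1) - f n

/-- Second difference operator. -/
def D (f : ℤ → ℝ) (n : ℤ) : ℝ := f (n + 1) - 2 * f n + f (n - 1)

/-- The WENO-6 perturbation term is uniformly bounded: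
`|F_n| ≤ (1/2)·max(⨆ k |df_k|, ⨆ k |Df_k|)`. -/
theorem weno6_perturbation_bounded (f : ℤ → ℝ) (hf : ∃ C, ∀ n, |f n| ≤ C)
    (a0 a1 a2 : ℝ) (ha0 : 0 ≤ a0) (ha1 : 0 ≤ a1) (ha2 : 0 ≤ a2)
    (hsum : a0 + a1 + a2 = 1) (n : ℤ) :
    |(a0 / 16) * D f (n + 2) - ((3 * a0 + a1) / 16) * D f (n + 1)
      - ((a1 + 3 * a2) / 16) * D f n + (a2 / 16) * D f (n - 1)|
      ≤ (1 / 2) * max (⨆ k, |d f k|) (⨆ k, |D f k|) := by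
  obtain ⟨C, hC⟩ := hf
  have hbdd : BddAbove (Set.range fun k => |D f k|) := by
    refine ⟨4 * C, ?_⟩
    rintro x ⟨k, rfl⟩
    have h1 := hC (k + 1); have h2 := hC k; have h3 := hC (k - 1)
    have := abs_nonneg (f k)
    simp only [D]
    have : |f (k + 1) - 2 * f k + f (k - 1)| ≤ |f (k+1)| + 2 * |f k| + |f (k-1)| := by
      calc |f (k + 1) - 2 * f k + f (k - 1)| ≤ |f (k+1) - 2 * f k| + |f (k-1)| :=
            abs_add_le _ _
        _ ≤ |f (k+1)| + |2 * f k| + |f (k-1)| := by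
            gcongr; exact abs_sub _ _
        _ = |f (k+1)| + 2 * |f k| + |f (k-1)| := by rw [abs_mul]; norm_num
    linarith
  set S := ⨆ k, |D f k| with hSdef
  have hD : ∀ k, |D f k| ≤ S := fun k => le_ciSup hbdd k
  have hS0 : 0 ≤ S := le_trans (abs_nonneg _) (hD 0)
  have hSM : S ≤ max (⨆ k, |d f k|) (⨆ k, |D f k|) := le_max_right _ _
  have h1 := hD (n + 2); have h2 := hD (n + 1); have h3 := hD n; have h4 := hD (n - 1)
  have e1 := abs_le.mp h1; have e2 := abs_le.mp h2
  have e3 := abs_le.mp h3; have e4 := abs_le.mp h4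
  rw [abs_le]
  constructor
  all_goals nlinarith [hSM, hS0, e1.1, e1.2, e2.1, e2.2, e3.1, e3.2, e4.1, e4.2,
    mul_nonneg ha0 hS0, mul_nonneg ha1 hS0, mul_nonneg ha2 hS0]
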